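/- Let R be a continuously differentiable real function on [−δ, δ] with δ > 0, let L := ∫_{−δ}^{δ} |R′(x)| dx and M := max_{x∈[−δ,δ]} |R(x)|, with M > 0. Then there exists η ∈ [−M, M] such that R − η has at least L/(2M) zeros in [−δ, δ]. -/

import Mathlib

open MeasureTheory Set Filter Topology intervalIntegral

open MeasureTheory Set Filter Topology intervalIntegral

lemma aux_sard (f f' : ℝ → ℝ) (s : Set ℝ) (hf : ∀ x ∈ s, HasDerivAt f (f' x) x)
    (h0 : ∀ x ∈ s, f' x = 0) : MeasureTheory.volume (f '' s) = 0 := by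
  have h : ∀ x ∈ s, HasFDerivWithinAt f ((1 : ℝ →L[ℝ] ℝ).smulRight (f' x)) s x := fun x hx =>
    ((hf x hx).hasFDerivAt).hasFDerivWithinAt
  apply MeasureTheory.addHaar_image_eq_zero_of_det_fderivWithin_eq_zero MeasureTheory.volume h
  intro x hx
  have hz : (1 : ℝ →L[ℝ] ℝ).smulRight (f' x) = 0 := by ext; simp [h0 x hx]
  rw [hz]
  show ((0 : ℝ →L[ℝ] ℝ) : ℝ →ₗ[ℝ] ℝ).det = 0
  rw [ContinuousLinearMap.coe_zero, LinearMap.det_zero' (Module.Basis.singleton Unit ℝ)]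

lemma aux_acc (f : ℝ → ℝ) (a x₀ η : ℝ) (S : Set ℝ) (hS : ∀ y ∈ S, f y = η)
    (hacc : AccPt x₀ (𝓟 S)) (hd : HasDerivAt f a x₀) : f x₀ = η ∧ a = 0 := by
  have hne : (𝓝[≠] x₀ ⊓ 𝓟 S).NeBot := hacc
  have hmemS : ∀ᶠ y in 𝓝[≠] x₀ ⊓ 𝓟 S, y ∈ S :=
    Eventually.filter_mono inf_le_right (eventually_principal.2 fun y hy => hy)
  have hney : ∀ᶠ y in 𝓝[≠] x₀ ⊓ 𝓟 S, y ≠ x₀ :=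
    Eventually.filter_mono inf_le_left (eventually_mem_nhdsWithin.mono fun y hy => hy)
  have hle : 𝓝[≠] x₀ ⊓ 𝓟 S ≤ 𝓝 x₀ := le_trans inf_le_left nhdsWithin_le_nhds
  have hfx : f x₀ = η := by
    have h1 : Tendsto f (𝓝[≠] x₀ ⊓ 𝓟 S) (𝓝 (f x₀)) := hd.continuousAt.tendsto.mono_left hle
    have h2 : Tendsto f (𝓝[≠] x₀ ⊓ 𝓟 S) (𝓝 η) := by
      apply Tendsto.congr' _ tendsto_const_nhds
      exact hmemS.mono fun y hy => (hS y hy).symm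
    exact tendsto_nhds_unique h1 h2
  refine ⟨hfx, ?_⟩
  have hs1 : Tendsto (slope f x₀) (𝓝[≠] x₀ ⊓ 𝓟 S) (𝓝 a) :=
    (hasDerivAt_iff_tendsto_slope.mp hd).mono_left inf_le_left
  have hs2 : Tendsto (slope f x₀) (𝓝[≠] x₀ ⊓ 𝓟 S) (𝓝 0) := by
    apply Tendsto.congr' _ tendsto_const_nhds
    filter_upwards [hmemS] with y hy
    simp [slope, hS y hy, hfx]
  exact tendsto_nhds_unique hs1 hs2


lemma aux_piece (R R' : ℝ → ℝ) (a b ε' : ℝ) (hab : a ≤ b)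
    (hderiv : ∀ x ∈ Set.Icc a b, HasDerivAt R (R' x) x)
    (hcont : ContinuousOn R' (Set.Icc a b))
    (hclose : ∀ t ∈ Set.Icc a b, |R' t - R' a| ≤ ε') :
    ∫ t in a..b, |R' t| ≤ |R b - R a| + 2 * ε' * (b - a) := by
  have huIcc : Set.uIcc a b = Set.Icc a b := Set.uIcc_of_le hab
  have hint : IntervalIntegrable R' volume a b := by
    apply ContinuousOn.intervalIntegrable; rwa [huIcc]
  have hintabs : IntervalIntegrable (fun t => |R' t|) volume a b := by
    apply ContinuousOn.intervalIntegrable; rw [huIcc]; exact hcont.abs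
  have hFTC : ∫ t in a..b, R' t = R b - R a := by
    apply integral_eq_sub_of_hasDerivAt (fun x hx => hderiv x (huIcc ▸ hx)) hint
  have h1 : ∫ t in a..b, |R' t| ≤ (|R' a| + ε') * (b - a) := by
    have := integral_mono_on hab hintabs (_root_.intervalIntegrable_const (c := |R' a| + ε'))
      (fun t ht => by
        have h := hclose t ht
        calc |R' t| ≤ |R' a| + |R' t - R' a| := by
              have := abs_sub_abs_le_abs_sub (R' t) (R' a); linarith [abs_nonneg (R' t - R' a)]
          _ ≤ |R' a| + ε' := by linarith)
    rw [intervalIntegral.integral_const, smul_eq_mul] at this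
    linarith
  have h2 : |R' a| * (b - a) ≤ |R b - R a| + ε' * (b - a) := by
    have hc : ∫ _t in a..b, R' a = (b - a) * R' a := by simp [smul_eq_mul]
    have hsub : ∫ t in a..b, (R' a - R' t) = (b - a) * R' a - (R b - R a) := by
      rw [integral_sub (_root_.intervalIntegrable_const) hint, hc, hFTC]
    have hbnd : |∫ t in a..b, (R' a - R' t)| ≤ ε' * |b - a| := by
      rw [← Real.norm_eq_abs]
      apply intervalIntegral.norm_integral_le_of_norm_le_const
      intro t ht
      have ht' : t ∈ Set.Icc a b := Set.mem_Icc_of_Ioc (Set.uIoc_of_le hab ▸ ht)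
      have := hclose t ht'
      rw [Real.norm_eq_abs, abs_sub_comm]; exact this
    rw [hsub] at hbnd
    have habs : |b - a| = b - a := abs_of_nonneg (by linarith)
    rw [habs] at hbnd
    have h3 : |(b - a) * R' a| ≤ |R b - R a| + ε' * (b - a) := by
      calc |(b - a) * R' a| ≤ |(b - a) * R' a - (R b - R a)| + |R b - R a| := by
            have := abs_sub_abs_le_abs_sub ((b-a) * R' a) (R b - R a)
            have := abs_add_le ((b - a) * R' a - (R b - R a)) (R b - R a)
            calc |(b - a) * R' a| = |((b - a) * R' a - (R b - R a)) + (R b - R a)| := by ring_nf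
              _ ≤ _ := abs_add_le _ _
        _ ≤ |R b - R a| + ε' * (b - a) := by linarith
    rw [abs_mul, abs_of_nonneg (by linarith : (0:ℝ) ≤ b - a)] at h3
    linarith [mul_comm (b - a) |R' a|]
  have hε : 0 ≤ ε' := le_trans (abs_nonneg _) (hclose a ⟨le_refl a, hab⟩)
  nlinarith [h1, h2]



/-- If `R` is continuously differentiable on `[-δ, δ]` with total variation `L` and maximum
modulus `M > 0`, then some level `η ∈ [-M, M]` is attained by `R` at least `L/(2M)` times. -/
theorem level_set_many_points (δ : ℝ) (hδ : 0 < δ) (R R' : ℝ → ℝ)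
    (hderiv : ∀ x ∈ Set.Icc (-δ) δ, HasDerivAt R (R' x) x)
    (hcont : ContinuousOn R' (Set.Icc (-δ) δ))
    (L M : ℝ) (hL : L = ∫ x in (-δ)..δ, |R' x|) (hM : 0 < M)
    (hub : ∀ x ∈ Set.Icc (-δ) δ, |R x| ≤ M)
    (hattain : ∃ x ∈ Set.Icc (-δ) δ, |R x| = M) :
    ∃ η ∈ Set.Icc (-M) M,
      L / (2 * M) ≤ (({x ∈ Set.Icc (-δ) δ | R x = η}).ncard : ℝ) := by
  obtain ⟨x₀, hx₀, hMx⟩ := hattain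
  have hη₀ : R x₀ ∈ Set.Icc (-M) M := by
    have := hub x₀ hx₀; rw [Set.mem_Icc]; exact abs_le.mp this
  by_cases hL0 : L ≤ 0
  · refine ⟨R x₀, hη₀, ?_⟩
    have : L / (2 * M) ≤ 0 := div_nonpos_iff.mpr (Or.inr ⟨hL0, by linarith⟩)
    exact le_trans this (Nat.cast_nonneg _)
  push_neg at hL0
  by_contra hcon
  push_neg at hcon
  set c : ℝ := L / (2 * M) with hc
  have hc0 : 0 < c := div_pos hL0 (by linarith)
  set n : ℕ := ⌈c⌉₊ - 1 with hn
  have hceil : 1 ≤ ⌈c⌉₊ := Nat.one_le_iff_ne_zero.mpr (by positivity)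
  have hnc : (n : ℝ) < c := by
    have : n < ⌈c⌉₊ := by omega
    exact (Nat.lt_ceil).mp this
  have hcount : ∀ η ∈ Set.Icc (-M) M, ({x ∈ Set.Icc (-δ) δ | R x = η}).ncard ≤ n := by
    intro η hη
    have h1 := hcon η hη
    have h2 : ({x ∈ Set.Icc (-δ) δ | R x = η}).ncard < ⌈c⌉₊ := Nat.lt_ceil.mpr h1
    omega
  set ε' : ℝ := M * (c - n) / (4 * δ) with hε'def
  have hε' : 0 < ε' := by
    apply div_pos (mul_pos hM (by linarith)) (by linarith)
  -- uniform continuity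
  have hUC : ∃ d > 0, ∀ s ∈ Set.Icc (-δ) δ, ∀ t ∈ Set.Icc (-δ) δ,
      |s - t| < d → |R' s - R' t| ≤ ε' := by
    have := (isCompact_Icc (a := -δ) (b := δ)).uniformContinuousOn_of_continuous hcont
    rw [Metric.uniformContinuousOn_iff] at this
    obtain ⟨d, hd, h⟩ := this ε' hε'
    exact ⟨d, hd, fun s hs t ht hst => le_of_lt (by
      have := h s hs t ht (by rwa [Real.dist_eq]); rwa [Real.dist_eq] at this)⟩
  obtain ⟨d, hd0, hd⟩ := hUC
  obtain ⟨k, hk⟩ := exists_nat_gt (2 * δ / d)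
  have hk0 : 0 < k := by
    have : (0:ℝ) < 2 * δ / d := by positivity
    exact_mod_cast Nat.pos_of_ne_zero (by rintro rfl; simp at hk; linarith)
  set Δ : ℝ := 2 * δ / k with hΔdef
  have hΔ : 0 < Δ := by positivity
  have hΔd : Δ < d := by
    rw [hΔdef, div_lt_iff₀ (by exact_mod_cast hk0)]
    rw [div_lt_iff₀ hd0] at hk
    linarith [hk]
  set x : ℕ → ℝ := fun i => -δ + i * Δ with hxdef
  have hxsucc : ∀ i : ℕ, x (i + 1) - x i = Δ := by
    intro i; simp only [hxdef]; push_cast; ring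
  have hxmono : ∀ i j : ℕ, i ≤ j → x i ≤ x j := by
    intro i j hij; simp only [hxdef]
    have : (i:ℝ) ≤ j := by exact_mod_cast hij
    nlinarith
  have hxk : x k = δ := by
    simp only [hxdef, hΔdef]
    field_simp
    ring
  have hxmem : ∀ i ≤ k, x i ∈ Set.Icc (-δ) δ := by
    intro i hik
    constructor
    · have : (0:ℝ) ≤ i * Δ := by positivity
      simp only [hxdef]; linarith
    · calc x i ≤ x k := hxmono i k hik
        _ = δ := hxk
  set v : ℕ → ℝ := fun i => R (x i) with hvdef
  have hvmem : ∀ i ≤ k, v i ∈ Set.Icc (-M) M := fun i hik => by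
    rw [Set.mem_Icc]; exact abs_le.mp (hub (x i) (hxmem i hik))
  -- partition sum lower bound
  have hle : ∀ i : ℕ, x i ≤ x (i + 1) := fun i => hxmono i (i + 1) (Nat.le_succ i)
  have hsub : ∀ i < k, Set.Icc (x i) (x (i + 1)) ⊆ Set.Icc (-δ) δ := fun i hik =>
    Set.Icc_subset_Icc (hxmem i (le_of_lt hik)).1 (hxmem (i + 1) hik).2
  have hsum : M * (c + n) ≤ ∑ i ∈ Finset.range k, |v (i + 1) - v i| := by
    have hint : ∀ i < k, IntervalIntegrable (fun t => |R' t|) volume (x i) (x (i + 1)) := by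
      intro i hik
      apply ContinuousOn.intervalIntegrable
      rw [Set.uIcc_of_le (hle i)]
      exact (hcont.mono (hsub i hik)).abs
    have hLsum : L = ∑ i ∈ Finset.range k, ∫ t in x i..x (i + 1), |R' t| := by
      rw [hL, intervalIntegral.sum_integral_adjacent_intervals (fun i hik => hint i hik)]
      have h0 : x 0 = -δ := by simp [hxdef]
      rw [h0, hxk]
    have hpiece : ∀ i < k, ∫ t in x i..x (i + 1), |R' t| ≤ |v (i + 1) - v i| + 2 * ε' * Δ := by
      intro i hik
      have hcl : ∀ t ∈ Set.Icc (x i) (x (i + 1)), |R' t - R' (x i)| ≤ ε' := by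
        intro t ht
        apply hd t (hsub i hik ht) (x i) (hxmem i (le_of_lt hik))
        have h1 : |t - x i| ≤ Δ := by
          rw [abs_of_nonneg (by linarith [ht.1])]
          linarith [ht.2, hxsucc i]
        linarith
      have := aux_piece R R' (x i) (x (i + 1)) ε' (hle i)
        (fun y hy => hderiv y (hsub i hik hy)) (hcont.mono (hsub i hik)) hcl
      rw [hxsucc i] at this
      exact this
    have hchain : L ≤ (∑ i ∈ Finset.range k, |v (i + 1) - v i|) + k * (2 * ε' * Δ) := by
      rw [hLsum]
      calc ∑ i ∈ Finset.range k, ∫ t in x i..x (i + 1), |R' t|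
          ≤ ∑ i ∈ Finset.range k, (|v (i + 1) - v i| + 2 * ε' * Δ) :=
            Finset.sum_le_sum fun i hi => hpiece i (Finset.mem_range.mp hi)
        _ = (∑ i ∈ Finset.range k, |v (i + 1) - v i|) + k * (2 * ε' * Δ) := by
            rw [Finset.sum_add_distrib, Finset.sum_const, Finset.card_range, nsmul_eq_mul]
    have hkΔ : (k : ℝ) * Δ = 2 * δ := by
      rw [hΔdef]
      field_simp
    have h4 : 4 * δ * ε' = M * (c - n) := by
      rw [hε'def]
      field_simp
      try ring
    have hL2 : L = 2 * M * c := by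
      rw [hc]; field_simp; try ring
    have hkk : (k : ℝ) * (2 * ε' * Δ) = M * (c - n) := by
      calc (k : ℝ) * (2 * ε' * Δ) = 2 * ε' * ((k : ℝ) * Δ) := by ring
        _ = 2 * ε' * (2 * δ) := by rw [hkΔ]
        _ = 4 * δ * ε' := by ring
        _ = M * (c - n) := h4
    rw [hkk] at hchain
    linarith
  -- null set
  set E : Set ℝ := (R '' {y ∈ Set.Icc (-δ) δ | R' y = 0}) ∪ (v '' Set.Iic k) with hEdef
  have hE : volume E = 0 := by
    apply measure_union_null
    · exact aux_sard R R' _ (fun y hy => hderiv y hy.1) (fun y hy => hy.2)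
    · exact Set.Countable.measure_zero ((Set.to_countable _).image v) volume
  -- counting function
  classical
  set g : ℝ → ℝ := fun η =>
    ∑ i ∈ Finset.range k, (Set.uIoc (v i) (v (i + 1))).indicator (fun _ => (1:ℝ)) η with hgdef
  have hmeas : ∀ i : ℕ, MeasurableSet (Set.uIoc (v i) (v (i + 1))) := fun i =>
    measurableSet_uIoc
  have huIocsub : ∀ i < k, Set.uIoc (v i) (v (i + 1)) ⊆ Set.Icc (-M) M := by
    intro i hik
    have h1 := hvmem i (le_of_lt hik)
    have h2 := hvmem (i + 1) hik
    refine subset_trans Set.Ioc_subset_Icc_self (Set.Icc_subset_Icc ?_ ?_)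
    · exact le_min h1.1 h2.1
    · exact max_le h1.2 h2.2
  have hintg : ∀ i : ℕ, Integrable
      ((Set.uIoc (v i) (v (i + 1))).indicator (fun _ => (1:ℝ)))
      (volume.restrict (Set.Icc (-M) M)) := by
    intro i
    rw [integrable_indicator_iff (hmeas i)]
    apply (integrableOn_const_iff (C := (1:ℝ))).mpr
    right
    calc (volume.restrict (Set.Icc (-M) M)) (Set.uIoc (v i) (v (i + 1)))
        ≤ volume (Set.uIoc (v i) (v (i + 1))) := Measure.restrict_apply_le _ _
      _ < ⊤ := measure_Ioc_lt_top
  have hgn : ∀ η ∉ E, g η ≤ n := by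
    intro η hη
    set T : Finset ℕ :=
      (Finset.range k).filter (fun i => η ∈ Set.uIoc (v i) (v (i + 1))) with hTdef
    have hgT : g η = (T.card : ℝ) := by
      rw [hgdef]
      simp only [Set.indicator_apply]
      rw [Finset.sum_boole]
    rcases Finset.eq_empty_or_nonempty T with hTe | hTne
    · rw [hgT, hTe]
      simp
    obtain ⟨i₀, hi₀⟩ := hTne
    have hi₀' := Finset.mem_filter.mp hi₀
    have hηIcc : η ∈ Set.Icc (-M) M :=
      huIocsub i₀ (Finset.mem_range.mp hi₀'.1) hi₀'.2
    have hηv : ∀ j ≤ k, η ≠ v j := by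
      intro j hj heq
      exact hη (Or.inr ⟨j, hj, heq.symm⟩)
    set S : Set ℝ := {y ∈ Set.Icc (-δ) δ | R y = η} with hSdef
    have hSfin : S.Finite := by
      by_contra hinf
      obtain ⟨y₀, hy₀K, hy₀acc⟩ :=
        Set.Infinite.exists_accPt_of_subset_isCompact hinf isCompact_Icc
          (fun y (hy : y ∈ S) => hy.1)
      obtain ⟨hfy, hdy⟩ := aux_acc R (R' y₀) y₀ η S (fun y hy => hy.2) hy₀acc
        (hderiv y₀ hy₀K)
      exact hη (Or.inl ⟨y₀, ⟨hy₀K, hdy⟩, hfy⟩)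
    set w : ℕ → ℝ := fun i =>
      if h : ∃ y ∈ Set.Ioo (x i) (x (i + 1)), R y = η then h.choose else 0 with hwdef
    have hw : ∀ i ∈ T, w i ∈ Set.Ioo (x i) (x (i + 1)) ∧ R (w i) = η := by
      intro i hiT
      have hiT' := Finset.mem_filter.mp hiT
      have hik := Finset.mem_range.mp hiT'.1
      have hmem := hiT'.2
      have hRc : ContinuousOn R (Set.Icc (x i) (x (i + 1))) := fun y hy =>
        (hderiv y (hsub i hik hy)).continuousAt.continuousWithinAt
      have hex : ∃ y ∈ Set.Ioo (x i) (x (i + 1)), R y = η := by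
        rcases le_or_gt (v i) (v (i + 1)) with hvle | hvlt
        · have hηmem : η ∈ Set.Ioo (v i) (v (i + 1)) := by
            rw [Set.uIoc_of_le hvle] at hmem
            exact ⟨hmem.1, lt_of_le_of_ne hmem.2 (hηv (i + 1) hik)⟩
          obtain ⟨y, hy, hRy⟩ := intermediate_value_Ioo (hle i) hRc hηmem
          exact ⟨y, hy, hRy⟩
        · have hηmem : η ∈ Set.Ioo (v (i + 1)) (v i) := by
            rw [Set.uIoc_of_ge (le_of_lt hvlt)] at hmem
            exact ⟨hmem.1, lt_of_le_of_ne hmem.2 (hηv i (le_of_lt hik))⟩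
          obtain ⟨y, hy, hRy⟩ := intermediate_value_Ioo' (hle i) hRc hηmem
          exact ⟨y, hy, hRy⟩
      rw [hwdef]
      simp only [dif_pos hex]
      exact ⟨hex.choose_spec.1, hex.choose_spec.2⟩
    have hkey : ∀ i ∈ T, ∀ j ∈ T, i < j → w i < w j := by
      intro i hi j hj hij
      calc w i < x (i + 1) := (hw i hi).1.2
        _ ≤ x j := hxmono (i + 1) j hij
        _ < w j := (hw j hj).1.1
    have hwinj : Set.InjOn w T := by
      intro i hi j hj heq
      rcases lt_trichotomy i j with h | h | h
      · exact absurd heq (ne_of_lt (hkey i hi j hj h))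
      · exact h
      · exact absurd heq.symm (ne_of_lt (hkey j hj i hi h))
    have hcard : T.card ≤ hSfin.toFinset.card := by
      apply Finset.card_le_card_of_injOn w _ hwinj
      intro i hi
      have hiT' := Finset.mem_filter.mp hi
      have hik := Finset.mem_range.mp hiT'.1
      rw [Finset.mem_coe, Set.Finite.mem_toFinset]
      refine ⟨hsub i hik (Set.Ioo_subset_Icc_self (hw i hi).1), (hw i hi).2⟩
    have hncard : S.ncard = hSfin.toFinset.card := Set.ncard_eq_toFinset_card S hSfin
    have hfin : T.card ≤ n := by
      rw [← hncard] at hcard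
      exact le_trans hcard (hcount η hηIcc)
    rw [hgT]
    exact_mod_cast hfin
  have hgint : ∫ η in Set.Icc (-M) M, g η = ∑ i ∈ Finset.range k, |v (i + 1) - v i| := by
    rw [hgdef]
    rw [integral_finset_sum _ (fun i _ => hintg i)]
    apply Finset.sum_congr rfl
    intro i hi
    have hik := Finset.mem_range.mp hi
    rw [setIntegral_indicator (hmeas i),
      Set.inter_eq_self_of_subset_right (huIocsub i hik)]
    rw [setIntegral_const, smul_eq_mul, mul_one, Set.uIoc, Real.volume_real_Ioc_of_le min_le_max]
    rw [max_sub_min_eq_abs, abs_sub_comm]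
  have hgle : ∫ η in Set.Icc (-M) M, g η ≤ n * (2 * M) := by
    have hginteg : Integrable g (volume.restrict (Set.Icc (-M) M)) := by
      rw [hgdef]
      exact integrable_finset_sum _ (fun i _ => hintg i)
    have hae : ∀ᵐ η ∂(volume.restrict (Set.Icc (-M) M)), g η ≤ (n : ℝ) := by
      apply ae_restrict_of_ae
      have hsubE : {η | ¬ g η ≤ (n : ℝ)} ⊆ E := by
        intro η hηmem
        by_contra hηE
        exact hηmem (hgn η hηE)
      rw [ae_iff]
      exact measure_mono_null hsubE hE
    calc ∫ η in Set.Icc (-M) M, g η ≤ ∫ _η in Set.Icc (-M) M, (n : ℝ) :=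
          integral_mono_ae hginteg (integrable_const _) hae
      _ = n * (2 * M) := by
          rw [setIntegral_const, smul_eq_mul, Real.volume_real_Icc_of_le (by linarith : -M ≤ M)]
          ring
  have : M * (c + n) ≤ n * (2 * M) := by
    calc M * (c + n) ≤ ∑ i ∈ Finset.range k, |v (i + 1) - v i| := hsum
      _ = ∫ η in Set.Icc (-M) M, g η := hgint.symm
      _ ≤ n * (2 * M) := hgle
  nlinarith [hnc, hM]
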